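/- arXiv:2301.02139 — 3 statements merged into one kernel-verified Lean document; each statement's English description precedes it below -/
import Mathlib

section
/- Let u = w₁w₂ and v = w₂w₃ be Lyndon words over a well-ordered alphabet with u >_lex v. Then w₁w₂w₃ is a Lyndon word. -/
variable {X : Type*} [LinearOrder X] [WellFoundedLT X]

/-- The partial order `≺` on words: `u ≺ v` iff `u = r ++ x :: s`, `v = r ++ y :: t`
with letters `x < y`. -/
def Prec (u v : List X) : Prop :=
  ∃ (r s t : List X) (x y : X), x < y ∧ u = r ++ x :: s ∧ v = r ++ y :: t

/-- The pseudo-lexicographic order: `u <_lex v` iff `v` is a proper prefix of `u` or `u ≺ v`. -/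
def PLex (u v : List X) : Prop :=
  (v <+: u ∧ v ≠ u) ∨ Prec u v

/-- `u ≤_lex v`. -/
def PLexLe (u v : List X) : Prop := u = v ∨ PLex u v

/-- A Lyndon word (Kharchenko convention): a nonempty word strictly greater in the
pseudo-lexicographic order than each of its proper nonempty suffixes. -/
def IsLyndon (u : List X) : Prop :=
  u ≠ [] ∧ ∀ v w : List X, u = v ++ w → v ≠ [] → w ≠ [] → PLex w u


def emb (u : List X) : List (WithTop X) := u.map (fun x => (x : WithTop X)) ++ [⊤]

lemma plex_emb {u v : List X} (h : PLex u v) :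
    List.Lex (· < ·) (emb u) (emb v) := by
  rcases h with ⟨⟨d, rfl⟩, hne⟩ | ⟨r, s, t, x, y, hxy, rfl, rfl⟩
  · have hd : d ≠ [] := by rintro rfl; simp at hne
    obtain ⟨a, d, rfl⟩ := List.exists_cons_of_ne_nil hd
    have : List.Lex (· < ·)
        ((v.map (fun x => (x : WithTop X))) ++ ((a : WithTop X) :: (d.map (fun x => (x : WithTop X)) ++ [⊤])))
        ((v.map (fun x => (x : WithTop X))) ++ [(⊤ : WithTop X)]) :=
      List.Lex.append_left _ (List.Lex.rel (WithTop.coe_lt_top a)) _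
    simpa [emb] using this
  · have : List.Lex (· < ·)
        ((r.map (fun x => (x : WithTop X))) ++ ((x : WithTop X) :: (s.map (fun x => (x : WithTop X)) ++ [⊤])))
        ((r.map (fun x => (x : WithTop X))) ++ ((y : WithTop X) :: (t.map (fun x => (x : WithTop X)) ++ [⊤]))) :=
      List.Lex.append_left _ (List.Lex.rel (WithTop.coe_lt_coe.mpr hxy)) _
    simpa [emb] using this

lemma plex_total (u v : List X) : u = v ∨ PLex u v ∨ PLex v u := by
  induction u generalizing v with
  | nil =>
    cases v with
    | nil => exact Or.inl rfl
    | cons y t => exact Or.inr (Or.inr (Or.inl ⟨⟨y :: t, rfl⟩, by simp⟩))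
  | cons x s ih =>
    cases v with
    | nil => exact Or.inr (Or.inl (Or.inl ⟨⟨x :: s, rfl⟩, by simp⟩))
    | cons y t =>
      rcases lt_trichotomy x y with hxy | rfl | hyx
      · exact Or.inr (Or.inl (Or.inr ⟨[], s, t, x, y, hxy, rfl, rfl⟩))
      · rcases ih t with rfl | h | h
        · exact Or.inl rfl
        · refine Or.inr (Or.inl ?_)
          rcases h with ⟨⟨d, rfl⟩, hne⟩ | ⟨r, s', t', a, b, hab, rfl, rfl⟩
          · exact Or.inl ⟨⟨d, by simp⟩, by simpa using hne⟩
          · exact Or.inr ⟨x :: r, s', t', a, b, hab, rfl, rfl⟩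
        · refine Or.inr (Or.inr ?_)
          rcases h with ⟨⟨d, rfl⟩, hne⟩ | ⟨r, s', t', a, b, hab, rfl, rfl⟩
          · exact Or.inl ⟨⟨d, by simp⟩, by simpa using hne⟩
          · exact Or.inr ⟨x :: r, s', t', a, b, hab, rfl, rfl⟩
      · exact Or.inr (Or.inr (Or.inr ⟨[], t, s, y, x, hyx, rfl, rfl⟩))

lemma plex_irrefl (u : List X) : ¬ PLex u u := by
  intro h
  exact asymm_of (List.Lex (· < ·)) (plex_emb h) (plex_emb h)

lemma plex_asymm {u v : List X} (h : PLex u v) : ¬ PLex v u := by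
  intro h'
  exact (asymm_of (List.Lex (· < ·)) (plex_emb h)) (plex_emb h')

lemma plex_trans {u v w : List X} (h : PLex u v) (h' : PLex v w) : PLex u w := by
  rcases plex_total u w with rfl | hh | hh
  · exact absurd (List.lex_trans (r := (· < ·)) (fun h1 h2 => lt_trans h1 h2) (plex_emb h) (plex_emb h'))
      (fun hc => asymm_of (List.Lex (· < ·)) hc hc)
  · exact hh
  · exact absurd (List.lex_trans (r := (· < ·)) (fun h1 h2 => lt_trans h1 h2) (plex_emb h) (plex_emb h'))
      (asymm_of (List.Lex (· < ·)) (plex_emb hh))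

lemma plex_append_left {s t : List X} (r : List X) (h : PLex s t) : PLex (r ++ s) (r ++ t) := by
  rcases h with ⟨⟨d, rfl⟩, hne⟩ | ⟨p, s', t', a, b, hab, rfl, rfl⟩
  · exact Or.inl ⟨⟨d, by simp⟩, by simpa using hne⟩
  · exact Or.inr ⟨r ++ p, s', t', a, b, hab, by simp, by simp⟩

lemma prec_append {u v : List X} (h : Prec u v) (c d : List X) : Prec (u ++ c) (v ++ d) := by
  obtain ⟨r, s, t, x, y, hxy, rfl, rfl⟩ := h
  exact ⟨r, s ++ c, t ++ d, x, y, hxy, by simp, by simp⟩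

/-- If `u = w₁w₂` and `v = w₂w₃` are Lyndon words with `u >_lex v`,
then `w₁w₂w₃` is a Lyndon word. -/
theorem isLyndon_append (w₁ w₂ w₃ : List X) (hu : IsLyndon (w₁ ++ w₂))
    (hv : IsLyndon (w₂ ++ w₃)) (hlt : PLex (w₂ ++ w₃) (w₁ ++ w₂)) :
    IsLyndon (w₁ ++ w₂ ++ w₃) := by
  by_cases h1 : w₁ = []
  · subst h1; simpa using hv
  -- key fact : v < w
  have hvw : PLex (w₂ ++ w₃) (w₁ ++ w₂ ++ w₃) := by
    rcases hlt with ⟨⟨z, hz⟩, hne⟩ | hprec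
    · -- u is a proper prefix of v
      have hupre : (w₁ ++ w₂) <+: (w₂ ++ w₃) := ⟨z, hz⟩
      have hw2 : w₂ = [] := by
        by_contra h2
        have ha : PLex w₂ (w₁ ++ w₂) := hu.2 w₁ w₂ rfl h1 h2
        have hpre2 : w₂ <+: (w₁ ++ w₂) :=
          List.prefix_of_prefix_length_le ⟨w₃, rfl⟩ hupre (by simp)
        refine plex_asymm ha (Or.inl ⟨hpre2, fun hh => h1 ?_⟩)
        have hll : w₂.length = w₁.length + w₂.length := by
          simpa using congrArg List.length hh
        exact List.length_eq_zero_iff.mp (by omega)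
      subst hw2
      simp only [List.nil_append, List.append_nil] at hz hne hv ⊢
      -- hz : w₁ ++ z = w₃  (from (w₁ ++ []) ++ z = [] ++ w₃)
      have hznil : z ≠ [] := by rintro rfl; simp at hz; exact hne hz
      have hzlt : PLex z w₃ := hv.2 w₁ z hz.symm h1 hznil
      have := plex_append_left w₁ hzlt
      rwa [hz] at this
    · exact Or.inr (by simpa using prec_append hprec [] w₃)
  constructor
  · simp [h1]
  intro p s hps hp hs
  have hps' : p ++ s = w₁ ++ (w₂ ++ w₃) := by rw [← hps]; simp
  rcases List.append_eq_append_iff.mp hps' with ⟨a, hw1, hs'⟩ | ⟨a, hpa, hva⟩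
  · -- w₁ = p ++ a, s = a ++ (w₂ ++ w₃)
    by_cases haz : a = []
    · subst haz; simp at hs'; subst hs'; exact hvw
    · have hsplit : w₁ ++ w₂ = p ++ (a ++ w₂) := by rw [hw1]; simp
      have h := hu.2 p (a ++ w₂) hsplit hp (by simp [haz])
      rcases h with ⟨⟨d, hd⟩, hne⟩ | hprec
      · exfalso
        have hl := congrArg List.length hd
        have hl2 := congrArg List.length hw1
        have hpl : 0 < p.length := List.length_pos_iff.mpr hp
        simp at hl hl2
        omega
      · refine Or.inr ?_
        have := prec_append hprec w₃ w₃
        rw [hs']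
        simpa [List.append_assoc] using this
  · -- p = w₁ ++ a, w₂ ++ w₃ = a ++ s
    by_cases haz : a = []
    · subst haz; simp at hva; subst hva; exact hvw
    · exact plex_trans (hv.2 a s hva haz hs) hvw
end

section
/- Let u₁ >_lex u₂ >_lex u' be nonempty words over a well-ordered alphabet such that u₁u₂ and u' are Lyndon words. Then u₁u₂u' >_lex u₁u' >_lex u' and u₁u₂u' >_lex u₂u' >_lex u'. -/
variable {X : Type*} [LinearOrder X] [WellFoundedLT X]

lemma prec_append_s6 {a b w z : List X} (h : Prec a b) : Prec (a ++ w) (b ++ z) := by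
  obtain ⟨r, s, t, x, y, hxy, ha, hb⟩ := h
  exact ⟨r, s ++ w, t ++ z, x, y, hxy, by simp [ha], by simp [hb]⟩

lemma plex_prepend {a b : List X} (c : List X) (h : PLex a b) : PLex (c ++ a) (c ++ b) := by
  rcases h with ⟨⟨w, hw⟩, hne⟩ | ⟨r, s, t, x, y, hxy, ha, hb⟩
  · left
    refine ⟨⟨w, by rw [List.append_assoc, hw]⟩, fun hc => hne ?_⟩
    exact List.append_cancel_left hc
  · right
    exact ⟨c ++ r, s, t, x, y, hxy, by simp [ha], by simp [hb]⟩

lemma plex_trans_s6 {a b c : List X} (hab : PLex a b) (hbc : PLex b c) : PLex a c := by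
  rcases hab with ⟨⟨w, hw⟩, hne⟩ | ⟨r, s, t, x, y, hxy, ha, hb⟩
  · -- a = b ++ w, b ≠ a
    rcases hbc with ⟨hp, hne'⟩ | ⟨r, s, t, x, y, hxy, hb, hc⟩
    · left
      refine ⟨hp.trans ⟨w, hw⟩, fun hca => hne' ?_⟩
      subst hca
      exact hp.eq_of_length (le_antisymm hp.length_le (List.IsPrefix.length_le ⟨w, hw⟩))
    · right
      exact ⟨r, s ++ w, t, x, y, hxy, by rw [← hw, hb]; simp, hc⟩
  · rcases hbc with ⟨⟨w, hw⟩, hne'⟩ | ⟨p, s', t', x', y', hxy', hb', hc⟩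
    · -- c ++ w = b = r ++ y :: t
      rw [hb] at hw
      rcases List.append_eq_append_iff.mp hw with ⟨a', hr, hw'⟩ | ⟨c', hc, hyt⟩
      · -- r = c ++ a'
        left
        refine ⟨⟨a' ++ x :: s, by rw [ha, hr]; simp⟩, fun hca => ?_⟩
        have hlen := congrArg List.length hca
        rw [ha, hr] at hlen
        simp at hlen
      · -- c = r ++ c', y :: t = c' ++ w
        cases c' with
        | nil =>
          left
          simp at hc
          refine ⟨⟨x :: s, by rw [ha, hc]⟩, fun hca => ?_⟩
          have hlen := congrArg List.length hca
          rw [ha, hc] at hlen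
          simp at hlen
        | cons z m =>
          have hz : z = y := by
            have := hyt
            simp at this
            exact this.1.symm
          right
          exact ⟨r, s, m, x, y, hxy, ha, by rw [hc, hz]⟩
    · -- b = r ++ y :: t = p ++ x' :: s'
      have hkey : r ++ (y :: t) = p ++ (x' :: s') := by rw [← hb, ← hb']
      rcases List.append_eq_append_iff.mp hkey with ⟨a', hp, hyt⟩ | ⟨c', hr, hxs⟩
      · cases a' with
        | nil =>
          simp at hp hyt
          right
          exact ⟨r, s, t', x, y', lt_trans (hyt.1 ▸ hxy) hxy', ha, by rw [hc, hp]⟩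
        | cons z m =>
          have hz : z = y := by simp at hyt; exact hyt.1.symm
          right
          exact ⟨r, s, m ++ y' :: t', x, y, hxy, ha, by rw [hc, hp, hz]; simp⟩
      · cases c' with
        | nil =>
          simp at hr hxs
          right
          exact ⟨r, s, t', x, y', lt_trans (hxs.1 ▸ hxy) hxy', ha, by rw [hc, hr]⟩
        | cons z m =>
          have hz : z = x' := by simp at hxs; exact hxs.1.symm
          right
          exact ⟨p, m ++ x :: s, t', x', y', hxy', by rw [ha, hr, hz]; simp, hc⟩

lemma plex_self_append {v u : List X} (hv : v ≠ []) (h : PLex u v) (hL : IsLyndon u) :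
    PLex u (v ++ u) := by
  rcases h with ⟨⟨w, hw⟩, hne⟩ | ⟨r, s, t, x, y, hxy, hu, hv'⟩
  · -- u = v ++ w
    have hwne : w ≠ [] := by
      rintro rfl
      exact hne (by simpa using hw)
    have := hL.2 v w hw.symm hv hwne
    have := plex_prepend v this
    rwa [hw] at this
  · right
    exact ⟨r, s, t ++ u, x, y, hxy, hu, by rw [hv']; simp⟩

/-- Let `u₁ >_lex u₂ >_lex u'` be nonempty words with `u₁u₂` and `u'`
Lyndon. Then `u₁u₂u' >_lex u₁u' >_lex u'` and `u₁u₂u' >_lex u₂u' >_lex u'`. -/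
theorem plex_concat_chain (u₁ u₂ u' : List X) (h₁ : u₁ ≠ []) (h₂ : u₂ ≠ [])
    (h' : u' ≠ []) (h12 : PLex u₂ u₁) (h2' : PLex u' u₂)
    (hL : IsLyndon (u₁ ++ u₂)) (hL' : IsLyndon u') :
    (PLex (u₁ ++ u') (u₁ ++ u₂ ++ u') ∧ PLex u' (u₁ ++ u')) ∧
    (PLex (u₂ ++ u') (u₁ ++ u₂ ++ u') ∧ PLex u' (u₂ ++ u')) := by
  have claim4 : PLex u' (u₂ ++ u') := plex_self_append h₂ h2' hL'
  have claim2 : PLex u' (u₁ ++ u') := plex_self_append h₁ (plex_trans_s6 h2' h12) hL'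
  have claim1 : PLex (u₁ ++ u') (u₁ ++ u₂ ++ u') := by
    rw [List.append_assoc]
    exact plex_prepend u₁ claim4
  have claim3 : PLex (u₂ ++ u') (u₁ ++ u₂ ++ u') := by
    have h := hL.2 u₁ u₂ rfl h₁ h₂
    rcases h with ⟨⟨w, hw⟩, hne⟩ | hp
    · exfalso
      have hpre : (u₁ ++ u₂) <+: u₂ := ⟨w, hw⟩
      have hlen := hpre.length_le
      simp at hlen
      exact h₁ hlen
    · exact Or.inr (prec_append_s6 hp)
  exact ⟨⟨claim1, claim2⟩, ⟨claim3, claim4⟩⟩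
end

section
/- Let u be a Lyndon word of length ≥ 2 over a well-ordered alphabet with Shirshov factorization (u_L, u_R). If v is a Lyndon factor of u, then v is a factor of u_L, or a factor of u_R, or a prefix of u with |v| > |u_L|. -/
variable {X : Type*} [LinearOrder X] [WellFoundedLT X]

/-- The Shirshov factorization of `u`: `u = uL ++ uR` where `uR` is the
pseudo-lexicographically largest proper (nonempty) suffix of `u`. -/
def IsShirshov (u uL uR : List X) : Prop :=
  u = uL ++ uR ∧ uL ≠ [] ∧ uR ≠ [] ∧
    ∀ w : List X, w <:+ u → w ≠ u → w ≠ [] → w = uR ∨ PLex w uR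


private theorem lex_append_of_lt (m : List X) {s t : List X} {x y : X} (h : x < y) :
    List.Lex (· < ·) (m ++ x :: s) (m ++ y :: t) := by
  induction m with
  | nil => exact List.Lex.rel h
  | cons a m ih => exact List.Lex.cons ih

private theorem lex_asymm : ∀ {a b : List X},
    List.Lex (· < ·) a b → List.Lex (· < ·) b a → False := by
  intro a b h1
  induction h1 with
  | nil => intro h2; cases h2
  | rel h =>
    intro h2
    cases h2 with
    | rel h' => exact absurd h' (lt_asymm h)
    | cons _ => exact lt_irrefl _ h
  | cons _ ih =>
    intro h2
    cases h2 with
    | rel h' => exact lt_irrefl _ h'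
    | cons h' => exact ih h'

private theorem prec_lex {a b : List X} (h : Prec a b) : List.Lex (· < ·) a b := by
  obtain ⟨r, s, t, x, y, hxy, ha, hb⟩ := h
  subst ha hb
  exact lex_append_of_lt r hxy

private theorem plex_asymm_s17 {a b : List X} (h1 : PLex a b) (h2 : PLex b a) : False := by
  rcases h1 with ⟨hp1, hne1⟩ | hprec1
  · rcases h2 with ⟨hp2, hne2⟩ | hprec2
    · exact hne1 (hp1.eq_of_length_le hp2.length_le)
    · obtain ⟨r, s, t, x, y, hxy, hb, ha⟩ := hprec2
      rw [ha, hb] at hp1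
      rw [List.prefix_append_right_inj, List.cons_prefix_cons] at hp1
      exact absurd hp1.1 (ne_of_lt hxy)
  · rcases h2 with ⟨hp2, hne2⟩ | hprec2
    · obtain ⟨r, s, t, x, y, hxy, ha, hb⟩ := hprec1
      rw [ha, hb] at hp2
      rw [List.prefix_append_right_inj, List.cons_prefix_cons] at hp2
      exact absurd hp2.1 (ne_of_lt hxy)
    · exact lex_asymm (prec_lex hprec1) (prec_lex hprec2)

/-- If `u` is a Lyndon word of length `≥ 2` with Shirshov
factorization `(uL, uR)` and `v` is a Lyndon factor of `u`, then `v` is a factor of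
`uL`, or a factor of `uR`, or a prefix of `u` with `|v| > |uL|`. -/
theorem lyndon_factor_trichotomy (u uL uR v : List X) (hu : IsLyndon u)
    (hlen : 2 ≤ u.length) (hS : IsShirshov u uL uR) (hv : IsLyndon v)
    (hf : v <:+: u) :
    v <:+: uL ∨ v <:+: uR ∨ (v <+: u ∧ uL.length < v.length) := by
  obtain ⟨hune, hLy⟩ := hu
  obtain ⟨huLR, hLne, hRne, hmax⟩ := hS
  obtain ⟨p, s, hps⟩ := hf
  have huL_pref : uL <+: u := ⟨uR, huLR.symm⟩
  have huR_suff : uR <:+ u := ⟨uL, huLR.symm⟩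
  by_cases h1 : p.length + v.length ≤ uL.length
  · -- v is a factor of uL
    left
    have hpv : p ++ v <+: u := ⟨s, hps⟩
    have : p ++ v <+: uL := by
      refine List.prefix_of_prefix_length_le hpv huL_pref ?_
      simpa using h1
    exact ((List.suffix_append p v).isInfix).trans this.isInfix
  · by_cases h2 : uL.length ≤ p.length
    · -- v is a factor of uR
      right; left
      have hvs : v ++ s <:+ u := ⟨p, by simpa using hps⟩
      have hlenvs : (v ++ s).length ≤ uR.length := by
        have := congrArg List.length hps
        simp only [List.length_append, huLR] at this ⊢
        omega
      have : v ++ s <:+ uR := List.suffix_of_suffix_length_le hvs huR_suff hlenvs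
      exact ((List.prefix_append v s).isInfix).trans this.isInfix
    · push_neg at h1 h2
      by_cases hp : p = []
      · -- v is a prefix of u longer than uL
        subst hp
        right; right
        refine ⟨⟨s, by simpa using hps⟩, ?_⟩
        simpa using h1
      · -- impossible case
        exfalso
        obtain ⟨a, ha⟩ : p <+: uL := by
          refine List.prefix_of_prefix_length_le ⟨v ++ s, by simpa using hps⟩ huL_pref h2.le
        have hane : a ≠ [] := by
          rintro rfl
          apply absurd h2
          simp [← ha]
        have hcanc : v ++ s = a ++ uR := by
          have : p ++ (v ++ s) = p ++ (a ++ uR) := by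
            rw [← List.append_assoc, hps, ← List.append_assoc, ha]; exact huLR
          exact List.append_cancel_left this
        have hla : a.length < v.length := by
          have := congrArg List.length ha
          simp only [List.length_append] at this
          omega
        obtain ⟨b, hb⟩ : a <+: v := by
          refine List.prefix_of_prefix_length_le ⟨uR, hcanc.symm⟩ ⟨s, rfl⟩ hla.le
        have hbne : b ≠ [] := by
          rintro rfl
          apply absurd hla
          simp [← hb]
        have hRbs : uR = b ++ s := by
          have : a ++ uR = a ++ (b ++ s) := by
            rw [← hcanc, ← List.append_assoc, hb]
          exact List.append_cancel_left this
        -- the suffix w = a ++ uR of u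
        have hw_suff : a ++ uR <:+ u := ⟨p, by rw [← List.append_assoc, ha, huLR]⟩
        have hw_ne_u : a ++ uR ≠ u := by
          intro hE
          have e1 := congrArg List.length hE
          have e2 := congrArg List.length ha
          have e3 := congrArg List.length huLR
          simp only [List.length_append] at e1 e2 e3
          have : p.length = 0 := by omega
          exact hp (List.length_eq_zero_iff.mp this)
        have hw_ne : a ++ uR ≠ [] := by simp [hRne]
        have hw_le : PLex (a ++ uR) uR := by
          rcases hmax (a ++ uR) hw_suff hw_ne_u hw_ne with hE | hP
          · exfalso
            have := congrArg List.length hE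
            simp only [List.length_append] at this
            have : a.length = 0 := by omega
            exact hane (List.length_eq_zero_iff.mp this)
          · exact hP
        -- from Lyndon property of v: b < v
        have hbv : PLex b v := hv.2 a b hb.symm hane hbne
        rcases hbv with ⟨hpref, hneq⟩ | ⟨r, s1, t1, x, y, hxy, hbr, hvr⟩
        · -- v <+: b impossible by length
          have h1 := hpref.length_le
          have h2 := congrArg List.length hb
          simp only [List.length_append] at h2
          have : a.length = 0 := by omega
          exact hane (List.length_eq_zero_iff.mp this)
        · -- then uR < a ++ uR, contradicting hw_le
          have hRw : PLex uR (a ++ uR) := by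
            right
            refine ⟨r, s1 ++ s, t1 ++ s, x, y, hxy, ?_, ?_⟩
            · rw [hRbs, hbr]; simp
            · have : a ++ uR = v ++ s := hcanc.symm
              rw [this, hvr]; simp
          exact plex_asymm_s17 hw_le hRw
end
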